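/- Let K ≥ 1 and suppose a sequence of symmetric matrices Ŵ^{(k)} ∈ ℝ^{K×K}, k = 1,…,K, is built as Ŵ^{(k)} = Σ_{m=1}^k W_m where each W_m is symmetric positive semidefinite, the upper-left 1×1 block of Ŵ^{(1)} is positive, and at each step k either the upper-left (k+1)×(k+1) block of Ŵ^{(k)} is already positive definite, or W_{k+1} is strictly positive on the one-dimensional kernel of that block. If at each step the upper-left k×k block of Ŵ^{(k)} is positive definite, then the upper-left (k+1)×(k+1) block of Ŵ^{(k+1)} is positive definite; in particular Ŵ^{(K)} is positive definite. -/

import Mathlib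

open scoped Matrix

private lemma shat_psd {K : ℕ} (W : Fin K → Matrix (Fin K) (Fin K) ℝ)
    (hPSD : ∀ m, (W m).PosSemidef) (s : Finset (Fin K)) :
    (∑ m ∈ s, W m).PosSemidef := by
  classical
  induction s using Finset.induction with
  | empty => simpa using Matrix.PosSemidef.zero
  | insert _ _ h ih =>
      rw [Finset.sum_insert h]
      exact (hPSD _).add ih

private lemma block_pd {K : ℕ} (W : Fin K → Matrix (Fin K) (Fin K) ℝ)
    (hPSD : ∀ m, (W m).PosSemidef)
    (Shat : ℕ → Matrix (Fin K) (Fin K) ℝ)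
    (hShat : ∀ k, Shat k = ∑ m ∈ Finset.univ.filter (fun m : Fin K => (m : ℕ) < k), W m)
    (hstep : ∀ (k : ℕ) (hk : k + 1 ≤ K),
      ((Shat k).submatrix (Fin.castLE hk) (Fin.castLE hk)).PosDef ∨
      (∀ v : Fin (k + 1) → ℝ, v ≠ 0 →
        (Shat k).submatrix (Fin.castLE hk) (Fin.castLE hk) *ᵥ v = 0 →
        0 < v ⬝ᵥ ((W ⟨k, hk⟩).submatrix (Fin.castLE hk) (Fin.castLE hk) *ᵥ v)))
    (k : ℕ) (hk : k + 1 ≤ K) :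
    ((Shat (k + 1)).submatrix (Fin.castLE hk) (Fin.castLE hk)).PosDef := by
  classical
  -- split the sum
  have hsucc : Shat (k + 1) = Shat k + W ⟨k, hk⟩ := by
    rw [hShat, hShat]
    have hset : (Finset.univ.filter (fun m : Fin K => (m : ℕ) < k + 1))
        = insert (⟨k, hk⟩ : Fin K) (Finset.univ.filter (fun m : Fin K => (m : ℕ) < k)) := by
      ext m
      simp [Nat.lt_succ_iff_lt_or_eq, Fin.ext_iff, or_comm]; omega
    rw [hset, Finset.sum_insert (by simp)]
    exact add_comm _ _
  have hBpsd : ((Shat k).submatrix (Fin.castLE hk) (Fin.castLE hk)).PosSemidef := by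
    rw [hShat]; exact (shat_psd W hPSD _).submatrix _
  have hWpsd : ((W ⟨k, hk⟩).submatrix (Fin.castLE hk) (Fin.castLE hk)).PosSemidef :=
    (hPSD _).submatrix _
  have hsub : (Shat (k + 1)).submatrix (Fin.castLE hk) (Fin.castLE hk)
      = (Shat k).submatrix (Fin.castLE hk) (Fin.castLE hk)
        + (W ⟨k, hk⟩).submatrix (Fin.castLE hk) (Fin.castLE hk) := by
    ext i j; simp [hsucc]
  rw [hsub]
  rcases hstep k hk with hpd | hker
  · exact hpd.add_posSemidef hWpsd
  · refine Matrix.PosDef.of_dotProduct_mulVec_pos (hBpsd.1.add hWpsd.1) fun x hx => ?_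
    simp only [Matrix.add_mulVec, dotProduct_add, RCLike.star_def, star_trivial] at *
    have hB0 : 0 ≤ x ⬝ᵥ (Shat k).submatrix (Fin.castLE hk) (Fin.castLE hk) *ᵥ x := by
      simpa using hBpsd.dotProduct_mulVec_nonneg x
    rcases lt_or_eq_of_le hB0 with hlt | heq
    · have hW0 : 0 ≤ x ⬝ᵥ (W ⟨k, hk⟩).submatrix (Fin.castLE hk) (Fin.castLE hk) *ᵥ x := by
        simpa using hWpsd.dotProduct_mulVec_nonneg x
      linarith
    · have hker0 : (Shat k).submatrix (Fin.castLE hk) (Fin.castLE hk) *ᵥ x = 0 := by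
        rw [← hBpsd.dotProduct_mulVec_zero_iff x]
        simpa using heq.symm
      have := hker x hx hker0
      linarith

/-- Inductive mechanism of the greedy reconstruction algorithm: given symmetric PSD summands
`W m` with partial sums `Shat k = ∑_{m<k} W m`, a positive initial `1×1` block, and at each
step either the `(k+1)×(k+1)` block of `Shat k` already PD or `W (k+1)` strictly positive on
the kernel of that block, all leading blocks of the partial sums are PD; in particular
`Shat K` is PD. -/
theorem stmt_4 (K : ℕ) (hK : 1 ≤ K) (W : Fin K → Matrix (Fin K) (Fin K) ℝ)
    (hPSD : ∀ m, (W m).PosSemidef)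
    (Shat : ℕ → Matrix (Fin K) (Fin K) ℝ)
    (hShat : ∀ k, Shat k = ∑ m ∈ Finset.univ.filter (fun m : Fin K => (m : ℕ) < k), W m)
    (h1 : 0 < Shat 1 ⟨0, hK⟩ ⟨0, hK⟩)
    (hstep : ∀ (k : ℕ) (hk : k + 1 ≤ K),
      ((Shat k).submatrix (Fin.castLE hk) (Fin.castLE hk)).PosDef ∨
      (∀ v : Fin (k + 1) → ℝ, v ≠ 0 →
        (Shat k).submatrix (Fin.castLE hk) (Fin.castLE hk) *ᵥ v = 0 →
        0 < v ⬝ᵥ ((W ⟨k, hk⟩).submatrix (Fin.castLE hk) (Fin.castLE hk) *ᵥ v))) :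
    (∀ (k : ℕ) (hk : k ≤ K), 1 ≤ k →
      ((Shat k).submatrix (Fin.castLE hk) (Fin.castLE hk)).PosDef)
    ∧ (Shat K).PosDef := by
  have main : ∀ (k : ℕ) (hk : k ≤ K), 1 ≤ k →
      ((Shat k).submatrix (Fin.castLE hk) (Fin.castLE hk)).PosDef := by
    intro k hk hk1
    obtain ⟨j, rfl⟩ : ∃ j, k = j + 1 := ⟨k - 1, (Nat.succ_pred_eq_of_pos hk1).symm⟩
    exact block_pd W hPSD Shat hShat hstep j hk
  refine ⟨main, ?_⟩
  have := main K le_rfl hK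
  have hid : (Fin.castLE (le_refl K)) = (id : Fin K → Fin K) := by
    funext i; simp [Fin.ext_iff]
  rwa [hid, Matrix.submatrix_id_id] at this
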